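/- arXiv:1806.08820 — 11 statements merged into one kernel-verified Lean document; each statement's English description precedes it below -/
import Mathlib

section
/- Let V be a real vector space, p and q positive integers, σ = (p + √(p² + 4q))/2, and F : V → V a linear map with F ∘ F = id (an almost product structure). Then each of the two linear maps J = (p/2)·id + ((2σ − p)/2)·F and J = (p/2)·id − ((2σ − p)/2)·F satisfies J ∘ J = p·J + q·id, i.e. F induces two metallic structures on V. -/
/-- An almost product structure `F` (`F ∘ F = id`) on a real vector space induces two
metallic structures `J = (p/2)·id ± ((2σ − p)/2)·F`, where `σ = (p + √(p² + 4q))/2`. -/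
theorem almostProduct_induces_two_metallic_structures
    {V : Type*} [AddCommGroup V] [Module ℝ V]
    (p q : ℕ) (hp : 0 < p) (hq : 0 < q)
    (σ : ℝ) (hσ : σ = ((p : ℝ) + Real.sqrt ((p : ℝ) ^ 2 + 4 * (q : ℝ))) / 2)
    (F : V →ₗ[ℝ] V) (hF : ∀ x : V, F (F x) = x) :
    (∀ x : V,
      (((p : ℝ) / 2) • (LinearMap.id : V →ₗ[ℝ] V) + ((2 * σ - (p : ℝ)) / 2) • F)
        ((((p : ℝ) / 2) • (LinearMap.id : V →ₗ[ℝ] V) + ((2 * σ - (p : ℝ)) / 2) • F) x)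
        = (p : ℝ) • ((((p : ℝ) / 2) • (LinearMap.id : V →ₗ[ℝ] V)
            + ((2 * σ - (p : ℝ)) / 2) • F) x) + (q : ℝ) • x) ∧
    (∀ x : V,
      (((p : ℝ) / 2) • (LinearMap.id : V →ₗ[ℝ] V) - ((2 * σ - (p : ℝ)) / 2) • F)
        ((((p : ℝ) / 2) • (LinearMap.id : V →ₗ[ℝ] V) - ((2 * σ - (p : ℝ)) / 2) • F) x)
        = (p : ℝ) • ((((p : ℝ) / 2) • (LinearMap.id : V →ₗ[ℝ] V)
            - ((2 * σ - (p : ℝ)) / 2) • F) x) + (q : ℝ) • x) := by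
  have hsq : (2 * σ - (p : ℝ)) ^ 2 = (p : ℝ) ^ 2 + 4 * (q : ℝ) := by
    have hnn : (0:ℝ) ≤ (p : ℝ) ^ 2 + 4 * (q : ℝ) := by positivity
    have h2 := Real.sq_sqrt hnn
    rw [hσ]; nlinarith [h2]
  constructor <;> intro x <;>
    simp only [LinearMap.add_apply, LinearMap.sub_apply, LinearMap.smul_apply,
      LinearMap.id_apply, map_add, map_sub, map_smul, hF, smul_smul] <;>
    match_scalars <;> nlinarith [hsq]
end

section
/- Let V be a real vector space, p and q positive integers, σ = (p + √(p² + 4q))/2, and J : V → V a linear map with J ∘ J = p·J + q·id. Define the linear maps l = (−1/(2σ − p))·J + (σ/(2σ − p))·id and m = (1/(2σ − p))·J + ((σ − p)/(2σ − p))·id. Then l + m = id, l ∘ l = l, m ∘ m = m, and l ∘ m = m ∘ l = 0; that is, l and m are complementary projection operators on V. -/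
/-- On a metallic manifold, the operators
`l = (−1/(2σ − p))·J + (σ/(2σ − p))·id` and `m = (1/(2σ − p))·J + ((σ − p)/(2σ − p))·id`
are complementary projection operators: `l + m = id`, `l² = l`, `m² = m`, `lm = ml = 0`. -/
theorem metallic_complementary_projections
    {V : Type*} [AddCommGroup V] [Module ℝ V]
    (p q : ℕ) (hp : 0 < p) (hq : 0 < q)
    (σ : ℝ) (hσ : σ = ((p : ℝ) + Real.sqrt ((p : ℝ) ^ 2 + 4 * (q : ℝ))) / 2)
    (J : V →ₗ[ℝ] V) (hJ : ∀ x : V, J (J x) = (p : ℝ) • J x + (q : ℝ) • x)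
    (l m : V →ₗ[ℝ] V)
    (hl : l = (-1 / (2 * σ - (p : ℝ))) • J + (σ / (2 * σ - (p : ℝ))) • (LinearMap.id : V →ₗ[ℝ] V))
    (hm : m = (1 / (2 * σ - (p : ℝ))) • J
        + ((σ - (p : ℝ)) / (2 * σ - (p : ℝ))) • (LinearMap.id : V →ₗ[ℝ] V)) :
    l + m = LinearMap.id ∧ l.comp l = l ∧ m.comp m = m ∧ l.comp m = 0 ∧ m.comp l = 0 := by
  have hpos : (0:ℝ) < (p : ℝ) ^ 2 + 4 * (q : ℝ) := by positivity
  have hr : Real.sqrt ((p : ℝ) ^ 2 + 4 * (q : ℝ)) ^ 2 = (p : ℝ) ^ 2 + 4 * (q : ℝ) :=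
    Real.sq_sqrt hpos.le
  have hrpos : 0 < Real.sqrt ((p : ℝ) ^ 2 + 4 * (q : ℝ)) := Real.sqrt_pos.mpr hpos
  have hs : 2 * σ - (p : ℝ) ≠ 0 := by
    rw [hσ]; intro h
    have : Real.sqrt ((p : ℝ) ^ 2 + 4 * (q : ℝ)) = 0 := by linarith
    linarith
  have hσ2 : σ ^ 2 = (p : ℝ) * σ + (q : ℝ) := by
    rw [hσ]; field_simp; nlinarith [hr]
  have hq' : (q : ℝ) = σ ^ 2 - (p : ℝ) * σ := by linarith [hσ2]
  refine ⟨?_, ?_, ?_, ?_, ?_⟩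
  · ext x
    simp only [hl, hm, LinearMap.add_apply, LinearMap.comp_apply, LinearMap.smul_apply,
      LinearMap.id_apply, LinearMap.zero_apply, map_add, map_smul, hJ, smul_add,
      smul_smul]
    match_scalars <;> (try simp only [hq']) <;> field_simp <;> (first | ring1 | tauto | (left; ring1) | (rw [div_eq_one_iff_eq (by intro h; apply hs; linarith)]; ring1))
  · ext x
    simp only [hl, hm, LinearMap.add_apply, LinearMap.comp_apply, LinearMap.smul_apply,
      LinearMap.id_apply, LinearMap.zero_apply, map_add, map_smul, hJ, smul_add,
      smul_smul]
    match_scalars <;> (try simp only [hq']) <;> field_simp <;> (first | ring1 | tauto | (left; ring1))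
  · ext x
    simp only [hl, hm, LinearMap.add_apply, LinearMap.comp_apply, LinearMap.smul_apply,
      LinearMap.id_apply, LinearMap.zero_apply, map_add, map_smul, hJ, smul_add,
      smul_smul]
    match_scalars <;> (try simp only [hq']) <;> field_simp <;> (first | ring1 | tauto | (left; ring1))
  · ext x
    simp only [hl, hm, LinearMap.add_apply, LinearMap.comp_apply, LinearMap.smul_apply,
      LinearMap.id_apply, LinearMap.zero_apply, map_add, map_smul, hJ, smul_add,
      smul_smul]
    match_scalars <;> (try simp only [hq']) <;> field_simp <;> (first | ring1 | tauto | (left; ring1))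
  · ext x
    simp only [hl, hm, LinearMap.add_apply, LinearMap.comp_apply, LinearMap.smul_apply,
      LinearMap.id_apply, LinearMap.zero_apply, map_add, map_smul, hJ, smul_add,
      smul_smul]
    match_scalars <;> (try simp only [hq']) <;> field_simp <;> (first | ring1 | tauto | (left; ring1))
end

section
/- Let V be a finite-dimensional real inner product space, W a subspace of V, p and q positive integers, and J : V → V a linear map with J ∘ J = p·J + q·id. Then p·NX = N(TX) + n(NX) for every X ∈ W. -/
open scoped RealInnerProductSpace

/-- For a metallic structure `J` (`J ∘ J = p·J + q·id`) and a subspace `W`,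
`p·NX = N(TX) + n(NX)` for every `X ∈ W`. -/
theorem metallic_N_rel
    {V : Type*} [NormedAddCommGroup V] [InnerProductSpace ℝ V] [FiniteDimensional ℝ V]
    (W : Submodule ℝ V) (p q : ℕ) (hp : 0 < p) (hq : 0 < q)
    (J : V →ₗ[ℝ] V) (hJ : ∀ x : V, J (J x) = (p : ℝ) • J x + (q : ℝ) • x)
    (T : V → V) (hT : ∀ x : V, T x = (Submodule.orthogonalProjectionOnto W (J x) : V))
    (N : V → V) (hN : ∀ x : V, N x = (Submodule.orthogonalProjectionOnto Wᗮ (J x) : V))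
    (n : V → V) (hn : ∀ u : V, n u = (Submodule.orthogonalProjectionOnto Wᗮ (J u) : V)) :
    ∀ x ∈ W, (p : ℝ) • N x = N (T x) + n (N x) := by
  intro x hx
  have hdecomp : T x + N x = J x := by
    rw [hT, hN]
    exact W.starProjection_add_starProjection_orthogonal (J x)
  have hx0 : (Submodule.orthogonalProjectionOnto Wᗮ x : V) = 0 := by
    have : x ∈ Wᗮᗮ := Submodule.le_orthogonal_orthogonal W hx
    simpa using congrArg (Subtype.val) (Submodule.orthogonalProjectionOnto_apply_of_mem_orthogonal this)
  have key : (Submodule.orthogonalProjectionOnto Wᗮ (J (T x)) : V) + (Submodule.orthogonalProjectionOnto Wᗮ (J (N x)) : V)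
      = (Submodule.orthogonalProjectionOnto Wᗮ (J (J x)) : V) := by
    rw [← hdecomp, map_add, map_add]
    push_cast
    ring
  simp only [hN, hn] at key ⊢
  rw [key, hJ, map_add, map_smul, map_smul]
  push_cast
  simp [hx0]
end

section
/- Let V be a finite-dimensional real inner product space, W a subspace of V, p and q positive integers, and J : V → V a linear map with J ∘ J = p·J + q·id. Then p·tU = T(tU) + t(nU) for every U ∈ W⊥. -/
open scoped RealInnerProductSpace

/-- For a metallic structure `J` (`J ∘ J = p·J + q·id`) and a subspace `W`,
`p·tU = T(tU) + t(nU)` for every `U ∈ W⊥`. -/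
theorem metallic_t_rel
    {V : Type*} [NormedAddCommGroup V] [InnerProductSpace ℝ V] [FiniteDimensional ℝ V]
    (W : Submodule ℝ V) (p q : ℕ) (hp : 0 < p) (hq : 0 < q)
    (J : V →ₗ[ℝ] V) (hJ : ∀ x : V, J (J x) = (p : ℝ) • J x + (q : ℝ) • x)
    (T : V → V) (hT : ∀ x : V, T x = (Submodule.orthogonalProjection W (J x) : V))
    (t : V → V) (ht : ∀ u : V, t u = (Submodule.orthogonalProjection W (J u) : V))
    (n : V → V) (hn : ∀ u : V, n u = (Submodule.orthogonalProjection Wᗮ (J u) : V)) :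
    ∀ u ∈ Wᗮ, (p : ℝ) • t u = T (t u) + t (n u) := by
  intro u hu
  have hsum : (Submodule.orthogonalProjection W (J u) : V) + (Submodule.orthogonalProjection Wᗮ (J u) : V) = J u :=
    W.starProjection_add_starProjection_orthogonal (J u)
  have hu0 : (Submodule.orthogonalProjection W u : V) = 0 := by
    rw [Submodule.orthogonalProjectionOnto_apply_of_mem_orthogonal hu]; rfl
  simp only [hT, ht, hn]
  have : J ((Submodule.orthogonalProjection W (J u) : V)) + J ((Submodule.orthogonalProjection Wᗮ (J u) : V))
      = J (J u) := by rw [← map_add, hsum]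
  calc (p:ℝ) • (Submodule.orthogonalProjection W (J u) : V)
      = (Submodule.orthogonalProjection W ((p:ℝ) • J u + (q:ℝ) • u) : V) := by
        rw [map_add, map_smul, map_smul]
        push_cast
        simp [hu0]
    _ = (Submodule.orthogonalProjection W (J (J u)) : V) := by rw [hJ]
    _ = _ := by rw [← this, map_add]; rfl
end

section
/- Let V be a finite-dimensional real inner product space, W a subspace of V, p and q positive integers, and J : V → V a linear map with J ∘ J = p·J + q·id which is compatible with the inner product, i.e. ⟨JX, Y⟩ = ⟨X, JY⟩ for all X, Y ∈ V. Suppose W is slant with slant angle θ, i.e. ‖TX‖ = cos θ · ‖JX‖ for every X ∈ W. Then ⟨TX, TY⟩ = cos²θ · (p·⟨X, TY⟩ + q·⟨X, Y⟩) for all X, Y ∈ W. -/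
open scoped RealInnerProductSpace

/-- If `W` is a slant subspace with slant angle `θ` for a compatible metallic
structure `J`, then `⟪TX, TY⟫ = cos²θ·(p·⟪X, TY⟫ + q·⟪X, Y⟫)` for all `X, Y ∈ W`. -/
theorem slant_inner_T_T
    {V : Type*} [NormedAddCommGroup V] [InnerProductSpace ℝ V] [FiniteDimensional ℝ V]
    (W : Submodule ℝ V) (p q : ℕ) (hp : 0 < p) (hq : 0 < q)
    (J : V →ₗ[ℝ] V) (hJ : ∀ x : V, J (J x) = (p : ℝ) • J x + (q : ℝ) • x)
    (hcompat : ∀ x y : V, ⟪J x, y⟫ = ⟪x, J y⟫)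
    (T : V → V) (hT : ∀ x : V, T x = (W.orthogonalProjection (J x) : V))
    (θ : ℝ) (hslant : ∀ x ∈ W, ‖T x‖ = Real.cos θ * ‖J x‖) :
    ∀ x ∈ W, ∀ y ∈ W,
      ⟪T x, T y⟫ = Real.cos θ ^ 2 * ((p : ℝ) * ⟪x, T y⟫ + (q : ℝ) * ⟪x, y⟫) := by
  intro x hx y hy
  set c := Real.cos θ with hc
  have hsq : ∀ z ∈ W, ⟪T z, T z⟫ = c ^ 2 * ⟪J z, J z⟫ := by
    intro z hz
    rw [real_inner_self_eq_norm_sq, real_inner_self_eq_norm_sq, hslant z hz]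
    ring
  have hTadd : T (x + y) = T x + T y := by
    simp [hT, map_add]
  -- polarization
  have hpol : ⟪T x, T y⟫ = c ^ 2 * ⟪J x, J y⟫ := by
    have h := hsq (x + y) (W.add_mem hx hy)
    rw [hTadd, map_add] at h
    rw [real_inner_add_add_self, real_inner_add_add_self,
      hsq x hx, hsq y hy] at h
    linarith
  -- metallic identity via compatibility
  have hJJ : ⟪J x, J y⟫ = (p : ℝ) * ⟪x, J y⟫ + (q : ℝ) * ⟪x, y⟫ := by
    rw [hcompat, hJ, inner_add_right, real_inner_smul_right, real_inner_smul_right]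
  -- ⟪x, J y⟫ = ⟪x, T y⟫ since J y - T y ∈ Wᗮ
  have hperp : ⟪x, J y⟫ = ⟪x, T y⟫ := by
    have hmem : J y - T y ∈ Wᗮ := by
      rw [hT]
      exact W.sub_starProjection_mem_orthogonal (J y)
    have h0 : ⟪x, J y - T y⟫ = 0 := hmem x hx
    rw [inner_sub_right] at h0
    linarith
  rw [hpol, hJJ, hperp]
end

section
/- Let V be a finite-dimensional real inner product space, W a subspace of V, p and q positive integers, and J : V → V a linear map with J ∘ J = p·J + q·id which is compatible with the inner product, i.e. ⟨JX, Y⟩ = ⟨X, JY⟩ for all X, Y ∈ V. Suppose W is slant with slant angle θ, i.e. ‖TX‖ = cos θ · ‖JX‖ for every X ∈ W. Then ⟨NX, NY⟩ = sin²θ · (p·⟨X, TY⟩ + q·⟨X, Y⟩) for all X, Y ∈ W. -/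
open scoped RealInnerProductSpace

/-- If `W` is a slant subspace with slant angle `θ` for a compatible metallic
structure `J`, then `⟪NX, NY⟫ = sin²θ·(p·⟪X, TY⟫ + q·⟪X, Y⟫)` for all `X, Y ∈ W`. -/
theorem slant_inner_N_N
    {V : Type*} [NormedAddCommGroup V] [InnerProductSpace ℝ V] [FiniteDimensional ℝ V]
    (W : Submodule ℝ V) (p q : ℕ) (hp : 0 < p) (hq : 0 < q)
    (J : V →ₗ[ℝ] V) (hJ : ∀ x : V, J (J x) = (p : ℝ) • J x + (q : ℝ) • x)
    (hcompat : ∀ x y : V, ⟪J x, y⟫ = ⟪x, J y⟫)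
    (T : V → V) (hT : ∀ x : V, T x = (Submodule.orthogonalProjection W (J x) : V))
    (N : V → V) (hN : ∀ x : V, N x = (Submodule.orthogonalProjection Wᗮ (J x) : V))
    (θ : ℝ) (hslant : ∀ x ∈ W, ‖T x‖ = Real.cos θ * ‖J x‖) :
    ∀ x ∈ W, ∀ y ∈ W,
      ⟪N x, N y⟫ = Real.sin θ ^ 2 * ((p : ℝ) * ⟪x, T y⟫ + (q : ℝ) * ⟪x, y⟫) := by
  intro x hx y hy
  have hdecomp : ∀ z : V, J z = T z + N z := by
    intro z
    rw [hT, hN]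
    exact (W.starProjection_add_starProjection_orthogonal (J z)).symm
  have hTmem : ∀ z : V, T z ∈ W := fun z => by rw [hT]; exact (Submodule.orthogonalProjection W (J z)).2
  have hNmem : ∀ z : V, N z ∈ Wᗮ := fun z => by rw [hN]; exact (Submodule.orthogonalProjection Wᗮ (J z)).2
  have hcross : ∀ a : V, ∀ b ∈ W, ⟪b, N a⟫ = 0 := fun a b hb =>
    (hNmem a) b hb
  -- ⟪J a, J b⟫ = p ⟪a, T b⟫ + q ⟪a, b⟫ for a b ∈ W
  have hJJ : ∀ a ∈ W, ∀ b : V, ⟪J a, J b⟫ = (p : ℝ) * ⟪a, T b⟫ + (q : ℝ) * ⟪a, b⟫ := by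
    intro a ha b
    have h1 : ⟪J a, J b⟫ = ⟪a, J (J b)⟫ := hcompat _ _
    rw [h1, hJ, inner_add_right, real_inner_smul_right, real_inner_smul_right]
    have h2 : ⟪a, J b⟫ = ⟪a, T b⟫ := by
      rw [hdecomp b, inner_add_right, hcross b a ha, add_zero]
    rw [h2]
  -- norms squared
  have hnormsq : ∀ z ∈ W, ‖T z‖ * ‖T z‖ = Real.cos θ ^ 2 * (‖J z‖ * ‖J z‖) := by
    intro z hz
    rw [hslant z hz]; ring
  have hTadd : T (x + y) = T x + T y := by
    simp only [hT, map_add]; push_cast; ring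
  have hTT : ⟪T x, T y⟫ = Real.cos θ ^ 2 * ⟪J x, J y⟫ := by
    have e1 := real_inner_eq_norm_add_mul_self_sub_norm_mul_self_sub_norm_mul_self_div_two (T x) (T y)
    have e2 := real_inner_eq_norm_add_mul_self_sub_norm_mul_self_sub_norm_mul_self_div_two (J x) (J y)
    rw [e1, e2, ← hTadd, ← map_add, hnormsq x hx, hnormsq y hy,
      hnormsq (x + y) (W.add_mem hx hy)]
    ring
  have hsplit : ⟪J x, J y⟫ = ⟪T x, T y⟫ + ⟪N x, N y⟫ := by
    rw [hdecomp x, hdecomp y, inner_add_left, inner_add_right, inner_add_right]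
    rw [hcross y (T x) (hTmem x)]
    have : ⟪N x, T y⟫ = 0 := by
      rw [real_inner_comm]; exact hcross x (T y) (hTmem y)
    rw [this]; ring
  have hNN : ⟪N x, N y⟫ = (1 - Real.cos θ ^ 2) * ⟪J x, J y⟫ := by
    have := hsplit
    rw [hTT] at this
    linarith
  rw [hNN, hJJ x hx y, ← Real.sin_sq]
end

section
/- Let V be a finite-dimensional real inner product space, W a subspace of V, p and q positive integers, and J : V → V a linear map with J ∘ J = p·J + q·id which is compatible with the inner product, i.e. ⟨JX, Y⟩ = ⟨X, JY⟩ for all X, Y ∈ V. Suppose W is slant with slant angle θ, i.e. ‖TX‖ = cos θ · ‖JX‖ for every X ∈ W. Then T(TX) = cos²θ · (p·TX + q·X) for every X ∈ W. -/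
open scoped RealInnerProductSpace

/-- If `W` is a slant subspace with slant angle `θ` for a compatible metallic
structure `J`, then `T² = cos²θ·(p·T + q·id)` on `W`. -/
theorem slant_T_sq
    {V : Type*} [NormedAddCommGroup V] [InnerProductSpace ℝ V] [FiniteDimensional ℝ V]
    (W : Submodule ℝ V) (p q : ℕ) (hp : 0 < p) (hq : 0 < q)
    (J : V →ₗ[ℝ] V) (hJ : ∀ x : V, J (J x) = (p : ℝ) • J x + (q : ℝ) • x)
    (hcompat : ∀ x y : V, ⟪J x, y⟫ = ⟪x, J y⟫)
    (T : V → V) (hT : ∀ x : V, T x = (W.orthogonalProjection (J x) : V))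
    (θ : ℝ) (hslant : ∀ x ∈ W, ‖T x‖ = Real.cos θ * ‖J x‖) :
    ∀ x ∈ W, T (T x) = Real.cos θ ^ 2 • ((p : ℝ) • T x + (q : ℝ) • x) := by
  intro x hx
  have hTmem : ∀ z : V, T z ∈ W := fun z => by
    rw [hT]; exact (W.orthogonalProjection (J z)).2
  -- projection property: ⟪T z, y⟫ = ⟪J z, y⟫ for y ∈ W
  have hproj : ∀ z : V, ∀ y ∈ W, ⟪T z, y⟫ = ⟪J z, y⟫ := by
    intro z y hy
    have h := Submodule.sub_starProjection_mem_orthogonal (K := W) (J z)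
    have h0 : ⟪y, J z - (W.orthogonalProjection (J z) : V)⟫ = 0 :=
      (Submodule.mem_orthogonal W _).1 h y hy
    rw [inner_sub_right, real_inner_comm (J z) y, real_inner_comm _ y] at h0
    rw [hT]
    linarith
  -- T is additive
  have hTadd : ∀ a b : V, T (a + b) = T a + T b := by
    intro a b
    rw [hT, hT, hT, map_add, map_add, Submodule.coe_add]
  -- polarization: ⟪T a, T b⟫ = cos²θ ⟪J a, J b⟫ for a, b ∈ W
  have hpol : ∀ a ∈ W, ∀ b ∈ W, ⟪T a, T b⟫ = Real.cos θ ^ 2 * ⟪J a, J b⟫ := by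
    intro a ha b hb
    have h1 := hslant a ha
    have h2 := hslant b hb
    have h3 := hslant (a + b) (W.add_mem ha hb)
    rw [hTadd, map_add] at h3
    have e1 := real_inner_eq_norm_add_mul_self_sub_norm_mul_self_sub_norm_mul_self_div_two
      (T a) (T b)
    have e2 := real_inner_eq_norm_add_mul_self_sub_norm_mul_self_sub_norm_mul_self_div_two
      (J a) (J b)
    rw [e1, e2, h1, h2, h3]
    ring
  -- the difference
  set c : V := Real.cos θ ^ 2 • ((p : ℝ) • T x + (q : ℝ) • x) with hc
  have hcmem : c ∈ W := W.smul_mem _ (W.add_mem (W.smul_mem _ (hTmem x)) (W.smul_mem _ hx))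
  have hdmem : T (T x) - c ∈ W := W.sub_mem (hTmem _) hcmem
  have key : ∀ y ∈ W, ⟪T (T x) - c, y⟫ = 0 := by
    intro y hy
    have s1 : ⟪T (T x), y⟫ = ⟪T x, T y⟫ := by
      rw [hproj _ y hy, hcompat]
      have h0 := Submodule.sub_starProjection_mem_orthogonal (K := W) (J y)
      have h1 : ⟪T x, J y - (W.orthogonalProjection (J y) : V)⟫ = 0 :=
        (Submodule.mem_orthogonal W _).1 h0 (T x) (hTmem x)
      rw [inner_sub_right] at h1
      rw [hT y]
      linarith
    have s2 : ⟪J x, J y⟫ = (p : ℝ) * ⟪T x, y⟫ + (q : ℝ) * ⟪x, y⟫ := by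
      rw [hcompat, hJ, inner_add_right, real_inner_smul_right, real_inner_smul_right,
        ← hcompat, hproj x y hy]
    rw [inner_sub_left, s1, hpol x hx y hy, s2, hc, real_inner_smul_left,
      inner_add_left, real_inner_smul_left, real_inner_smul_left]
    ring
  have : T (T x) - c = 0 := by
    have := key _ hdmem
    rwa [inner_self_eq_zero] at this
  have := sub_eq_zero.mp this
  exact this
end

section
/- Let V be a finite-dimensional real inner product space, p and q positive integers, and J : V → V a linear map with J ∘ J = p·J + q·id which is compatible with the inner product, i.e. ⟨JX, Y⟩ = ⟨X, JY⟩ for all X, Y ∈ V. Let D₁ and D₂ be mutually orthogonal subspaces of V and W = D₁ ⊕ D₂ their (internal) direct sum. Assume ⟨JX, Y⟩ = 0 for all X ∈ D₁ and Y ∈ D₂, and assume D₁ and D₂ are both slant with the same slant angle θ, i.e. ‖proj_{D_i}(JX)‖ = cos θ · ‖JX‖ for every X ∈ D_i (i = 1, 2). Then W is slant with slant angle θ, i.e. ‖proj_W(JX)‖ = cos θ · ‖JX‖ for every X ∈ W. -/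
open scoped RealInnerProductSpace

/-- If `D₁` and `D₂` are mutually orthogonal subspaces, both slant with the same slant
angle `θ` for a compatible metallic structure `J`, and `⟪JX, Y⟫ = 0` for `X ∈ D₁`,
`Y ∈ D₂`, then `W = D₁ ⊕ D₂` is slant with slant angle `θ`. -/
theorem bislant_equal_angles_is_slant
    {V : Type*} [NormedAddCommGroup V] [InnerProductSpace ℝ V] [FiniteDimensional ℝ V]
    (p q : ℕ) (hp : 0 < p) (hq : 0 < q)
    (J : V →ₗ[ℝ] V) (hJ : ∀ x : V, J (J x) = (p : ℝ) • J x + (q : ℝ) • x)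
    (hcompat : ∀ x y : V, ⟪J x, y⟫ = ⟪x, J y⟫)
    (D₁ D₂ : Submodule ℝ V)
    (horth : ∀ x ∈ D₁, ∀ y ∈ D₂, ⟪x, y⟫ = 0)
    (hJorth : ∀ x ∈ D₁, ∀ y ∈ D₂, ⟪J x, y⟫ = 0)
    (θ : ℝ)
    (hslant₁ : ∀ x ∈ D₁, ‖(Submodule.orthogonalProjectionOnto D₁ (J x) : V)‖ = Real.cos θ * ‖J x‖)
    (hslant₂ : ∀ x ∈ D₂, ‖(Submodule.orthogonalProjectionOnto D₂ (J x) : V)‖ = Real.cos θ * ‖J x‖) :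
    ∀ x ∈ D₁ ⊔ D₂, ‖(Submodule.orthogonalProjectionOnto (D₁ ⊔ D₂) (J x) : V)‖ = Real.cos θ * ‖J x‖ := by
  -- J is injective
  have hJinj : ∀ z : V, J z = 0 → z = 0 := by
    intro z hz
    have h := hJ z
    rw [hz, map_zero, smul_zero, zero_add] at h
    have hq' : (q : ℝ) ≠ 0 := by positivity
    simpa [smul_eq_zero, hq'] using h.symm
  -- ⟪J y, x⟫ = 0 for y ∈ D₂, x ∈ D₁
  have hJorth' : ∀ y ∈ D₂, ∀ x ∈ D₁, ⟪J y, x⟫ = 0 := by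
    intro y hy x hx
    rw [hcompat, real_inner_comm]
    exact hJorth x hx y hy
  intro x hx
  rcases Submodule.mem_sup.1 hx with ⟨x₁, hx₁, x₂, hx₂, rfl⟩
  -- the candidate projection
  set v : V := (Submodule.orthogonalProjectionOnto D₁ (J x₁) : V) + (Submodule.orthogonalProjectionOnto D₂ (J x₂) : V)
    with hv
  have hP₁ : (Submodule.orthogonalProjectionOnto D₁ (J x₁) : V) ∈ D₁ := (Submodule.orthogonalProjectionOnto D₁ (J x₁)).2
  have hP₂ : (Submodule.orthogonalProjectionOnto D₂ (J x₂) : V) ∈ D₂ := (Submodule.orthogonalProjectionOnto D₂ (J x₂)).2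
  have hvm : v ∈ D₁ ⊔ D₂ :=
    Submodule.add_mem_sup hP₁ hP₂
  have hproj : (Submodule.orthogonalProjectionOnto (D₁ ⊔ D₂) (J (x₁ + x₂)) : V) = v := by
    refine (Submodule.coe_orthogonalProjectionOnto_apply _ _).trans (Submodule.eq_starProjection_of_mem_of_inner_eq_zero hvm ?_)
    intro w hw
    rcases Submodule.mem_sup.1 hw with ⟨w₁, hw₁, w₂, hw₂, rfl⟩
    have key : J (x₁ + x₂) - v =
        (J x₁ - (Submodule.orthogonalProjectionOnto D₁ (J x₁) : V)) +
        (J x₂ - (Submodule.orthogonalProjectionOnto D₂ (J x₂) : V)) := by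
      rw [hv, map_add]; abel
    rw [key]
    have h11 : ⟪J x₁ - (Submodule.orthogonalProjectionOnto D₁ (J x₁) : V), w₁⟫ = 0 :=
      Submodule.starProjection_inner_eq_zero (J x₁) w₁ hw₁
    have h22 : ⟪J x₂ - (Submodule.orthogonalProjectionOnto D₂ (J x₂) : V), w₂⟫ = 0 :=
      Submodule.starProjection_inner_eq_zero (J x₂) w₂ hw₂
    have h12 : ⟪J x₁ - (Submodule.orthogonalProjectionOnto D₁ (J x₁) : V), w₂⟫ = 0 := by
      rw [inner_sub_left, hJorth x₁ hx₁ w₂ hw₂, horth _ hP₁ w₂ hw₂, sub_zero]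
    have h21 : ⟪J x₂ - (Submodule.orthogonalProjectionOnto D₂ (J x₂) : V), w₁⟫ = 0 := by
      rw [inner_sub_left, hJorth' x₂ hx₂ w₁ hw₁]
      rw [real_inner_comm, horth w₁ hw₁ _ hP₂]
      ring
    rw [inner_add_left, inner_add_right, inner_add_right, h11, h22, h12, h21]
    ring
  rw [hproj]
  -- orthogonality facts
  have hJ12 : ⟪J x₁, J x₂⟫ = 0 := by
    rw [hcompat, hJ x₂, inner_add_right, inner_smul_right, inner_smul_right]
    have h1 : ⟪x₁, J x₂⟫ = 0 := by
      rw [real_inner_comm]; exact hJorth' x₂ hx₂ x₁ hx₁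
    rw [h1, horth x₁ hx₁ x₂ hx₂]
    ring
  have hP12 : ⟪(Submodule.orthogonalProjectionOnto D₁ (J x₁) : V), (Submodule.orthogonalProjectionOnto D₂ (J x₂) : V)⟫ = 0 :=
    horth _ hP₁ _ hP₂
  have hnJ : ‖J (x₁ + x₂)‖ ^ 2 = ‖J x₁‖ ^ 2 + ‖J x₂‖ ^ 2 := by
    rw [map_add, norm_add_sq_real, hJ12]; ring
  have hnv : ‖v‖ ^ 2 = ‖(Submodule.orthogonalProjectionOnto D₁ (J x₁) : V)‖ ^ 2 +
      ‖(Submodule.orthogonalProjectionOnto D₂ (J x₂) : V)‖ ^ 2 := by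
    rw [hv, norm_add_sq_real, hP12]; ring
  rw [hslant₁ x₁ hx₁, hslant₂ x₂ hx₂] at hnv
  -- case analysis on whether cos θ is nonneg (via nonzero components) or everything is zero
  by_cases hc : x₁ = 0 ∧ x₂ = 0
  · rw [hc.1, hc.2]; simp [hv, hc.1, hc.2]
  · have hcos : 0 ≤ Real.cos θ := by
      rcases not_and_or.1 hc with h1 | h2
      · have hJx₁ : J x₁ ≠ 0 := fun h => h1 (hJinj x₁ h)
        have := hslant₁ x₁ hx₁
        nlinarith [norm_nonneg ((Submodule.orthogonalProjectionOnto D₁ (J x₁) : V)),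
          norm_pos_iff.2 hJx₁]
      · have hJx₂ : J x₂ ≠ 0 := fun h => h2 (hJinj x₂ h)
        have := hslant₂ x₂ hx₂
        nlinarith [norm_nonneg ((Submodule.orthogonalProjectionOnto D₂ (J x₂) : V)),
          norm_pos_iff.2 hJx₂]
    have hsq : ‖v‖ ^ 2 = (Real.cos θ * ‖J (x₁ + x₂)‖) ^ 2 := by
      calc ‖v‖ ^ 2 = Real.cos θ ^ 2 * (‖J x₁‖ ^ 2 + ‖J x₂‖ ^ 2) := by rw [hnv]; ring
        _ = Real.cos θ ^ 2 * ‖J (x₁ + x₂)‖ ^ 2 := by rw [hnJ]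
        _ = (Real.cos θ * ‖J (x₁ + x₂)‖) ^ 2 := by ring
    have h1 : 0 ≤ ‖v‖ := norm_nonneg v
    have h2 : 0 ≤ Real.cos θ * ‖J (x₁ + x₂)‖ := mul_nonneg hcos (norm_nonneg _)
    nlinarith
end

section
/- Let V be a finite-dimensional real inner product space, p and q positive integers, and J : V → V a linear map with J ∘ J = p·J + q·id which is compatible with the inner product, i.e. ⟨JX, Y⟩ = ⟨X, JY⟩ for all X, Y ∈ V. Let D₁ and D₂ be mutually orthogonal subspaces of V, W = D₁ ⊕ D₂, and suppose D₁ is invariant, i.e. J(D₁) ⊆ D₁, and D₂ is slant with slant angle θ, i.e. ‖proj_{D₂}(JZ)‖ = cos θ · ‖JZ‖ for every Z ∈ D₂. Write P₂ for the orthogonal projection onto D₂, T for the orthogonal projection of J onto W (TX = proj_W(JX)), and N for the orthogonal projection of J onto W⊥ (NX = proj_{W⊥}(JX)). Then for all X, Y ∈ W: ⟨T(P₂X), T(P₂Y)⟩ = cos²θ · (p·⟨T(P₂X), P₂Y⟩ + q·⟨P₂X, P₂Y⟩) and ⟨NX, NY⟩ = sin²θ · (p·⟨T(P₂X), P₂Y⟩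 + q·⟨P₂X, P₂Y⟩). -/
open scoped RealInnerProductSpace

/-- For a semi-slant subspace `W = D₁ ⊕ D₂` (with `D₁` invariant and `D₂` slant with
slant angle `θ`) of a compatible metallic structure `J`:
`⟪T(P₂X), T(P₂Y)⟫ = cos²θ·(p·⟪T(P₂X), P₂Y⟫ + q·⟪P₂X, P₂Y⟫)` and
`⟪NX, NY⟫ = sin²θ·(p·⟪T(P₂X), P₂Y⟫ + q·⟪P₂X, P₂Y⟫)` for all `X, Y ∈ W`. -/
theorem semiSlant_inner_relations
    {V : Type*} [NormedAddCommGroup V] [InnerProductSpace ℝ V] [FiniteDimensional ℝ V]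
    (p q : ℕ) (hp : 0 < p) (hq : 0 < q)
    (J : V →ₗ[ℝ] V) (hJ : ∀ x : V, J (J x) = (p : ℝ) • J x + (q : ℝ) • x)
    (hcompat : ∀ x y : V, ⟪J x, y⟫ = ⟪x, J y⟫)
    (D₁ D₂ : Submodule ℝ V)
    (horth : ∀ x ∈ D₁, ∀ y ∈ D₂, ⟪x, y⟫ = 0)
    (hinv : ∀ x ∈ D₁, J x ∈ D₁)
    (θ : ℝ)
    (hslant₂ : ∀ z ∈ D₂, ‖(Submodule.orthogonalProjection D₂ (J z) : V)‖ = Real.cos θ * ‖J z‖)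
    (W : Submodule ℝ V) (hW : W = D₁ ⊔ D₂)
    (P₂ : V → V) (hP₂ : ∀ x : V, P₂ x = (Submodule.orthogonalProjection D₂ x : V))
    (T : V → V) (hT : ∀ x : V, T x = (Submodule.orthogonalProjection W (J x) : V))
    (N : V → V) (hN : ∀ x : V, N x = (Submodule.orthogonalProjection Wᗮ (J x) : V)) :
    ∀ x ∈ W, ∀ y ∈ W,
      ⟪T (P₂ x), T (P₂ y)⟫
          = Real.cos θ ^ 2 * ((p : ℝ) * ⟪T (P₂ x), P₂ y⟫ + (q : ℝ) * ⟪P₂ x, P₂ y⟫) ∧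
      ⟪N x, N y⟫
          = Real.sin θ ^ 2 * ((p : ℝ) * ⟪T (P₂ x), P₂ y⟫ + (q : ℝ) * ⟪P₂ x, P₂ y⟫) := by
  intro x hx y hy
  have hD₁W : D₁ ≤ W := hW ▸ le_sup_left
  have hD₂W : D₂ ≤ W := hW ▸ le_sup_right
  -- J z is orthogonal to D₁ for z ∈ D₂
  have hJperp : ∀ z ∈ D₂, ∀ u ∈ D₁, ⟪u, J z⟫ = 0 := by
    intro z hz u hu
    rw [← hcompat]
    exact horth _ (hinv u hu) z hz
  -- T z ∈ D₂ for z ∈ D₂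
  have hTz_mem : ∀ z ∈ D₂, T z ∈ D₂ := by
    intro z hz
    have hdec : (Submodule.orthogonalProjection W (J z) : V) + (Submodule.orthogonalProjection Wᗮ (J z) : V) = J z :=
      Submodule.starProjection_add_starProjection_orthogonal (K := W) (J z)
    have haW : (Submodule.orthogonalProjection W (J z) : V) ∈ D₁ ⊔ D₂ := by
      rw [← hW]; exact SetLike.coe_mem _
    obtain ⟨a₁, h₁, a₂, h₂, hsum⟩ := Submodule.mem_sup.mp haW
    have hperp : ∀ u ∈ D₁, ⟪u, (Submodule.orthogonalProjection W (J z) : V)⟫ = 0 := by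
      intro u hu
      have h2 : ⟪u, (Submodule.orthogonalProjection Wᗮ (J z) : V)⟫ = 0 :=
        (Submodule.mem_orthogonal W _).mp (SetLike.coe_mem _) u (hD₁W hu)
      have h1 := hJperp z hz u hu
      rw [← hdec, inner_add_right, h2, add_zero] at h1
      exact h1
    have ha₁ : a₁ = 0 := by
      have h := hperp a₁ h₁
      rw [← hsum, inner_add_right, horth a₁ h₁ a₂ h₂, add_zero] at h
      exact inner_self_eq_zero.mp h
    rw [hT, ← hsum, ha₁, zero_add]
    exact h₂
  -- T z = proj_{D₂}(J z) for z ∈ D₂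
  have hTD₂ : ∀ z ∈ D₂, T z = (Submodule.orthogonalProjection D₂ (J z) : V) := by
    intro z hz
    have hdec : (Submodule.orthogonalProjection W (J z) : V) + (Submodule.orthogonalProjection Wᗮ (J z) : V) = J z :=
      Submodule.starProjection_add_starProjection_orthogonal (K := W) (J z)
    have hNperp : (Submodule.orthogonalProjection Wᗮ (J z) : V) ∈ D₂ᗮ :=
      Submodule.orthogonal_le hD₂W (SetLike.coe_mem _)
    have hh := congrArg (fun v => (Submodule.orthogonalProjection D₂ v : V)) hdec
    simp only [map_add, Submodule.coe_add] at hh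
    rw [Submodule.orthogonalProjectionOnto_apply_of_mem_orthogonal hNperp] at hh
    have hself : (Submodule.orthogonalProjection D₂ ((Submodule.orthogonalProjection W (J z) : V)) : V)
        = (Submodule.orthogonalProjection W (J z) : V) :=
      Submodule.starProjection_eq_self_iff.mpr (hT z ▸ hTz_mem z hz)
    rw [← hh, hself, hT]
    simp
  -- norm relation
  have hnorm : ∀ z ∈ D₂, ‖T z‖ = Real.cos θ * ‖J z‖ := by
    intro z hz
    rw [hTD₂ z hz]
    exact hslant₂ z hz
  -- T is additive
  have hTadd : ∀ z w : V, T (z + w) = T z + T w := by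
    intro z w
    simp [hT, map_add]
  -- key polarization identity
  have key : ∀ z ∈ D₂, ∀ w ∈ D₂, ⟪T z, T w⟫ = Real.cos θ ^ 2 * ⟪J z, J w⟫ := by
    intro z hz w hw
    have h1 : ‖T z‖ ^ 2 = Real.cos θ ^ 2 * ‖J z‖ ^ 2 := by rw [hnorm z hz]; ring
    have h2 : ‖T w‖ ^ 2 = Real.cos θ ^ 2 * ‖J w‖ ^ 2 := by rw [hnorm w hw]; ring
    have h3 : ‖T z + T w‖ ^ 2 = Real.cos θ ^ 2 * ‖J z + J w‖ ^ 2 := by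
      rw [← hTadd, hnorm (z + w) (D₂.add_mem hz hw), map_add]; ring
    have e1 := norm_add_sq_real (T z) (T w)
    have e2 := norm_add_sq_real (J z) (J w)
    rw [e1, e2] at h3
    linear_combination (h3 - h1 - h2) / 2
  -- J decomposition
  have hJTN : ∀ z : V, J z = T z + N z := by
    intro z
    rw [hT, hN]; exact (Submodule.starProjection_add_starProjection_orthogonal (K := W) (J z)).symm
  have hNmem : ∀ z : V, N z ∈ Wᗮ := fun z => hN z ▸ SetLike.coe_mem _
  have hTmem : ∀ z : V, T z ∈ W := fun z => hT z ▸ SetLike.coe_mem _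
  have hcross : ∀ a b : V, a ∈ W → b ∈ Wᗮ → ⟪a, b⟫ = 0 := fun a b ha hb =>
    (Submodule.mem_orthogonal W b).mp hb a ha
  -- ⟪J z, w⟫ = ⟪T z, w⟫ for w ∈ W
  have hJT : ∀ z : V, ∀ w ∈ W, ⟪J z, w⟫ = ⟪T z, w⟫ := by
    intro z w hw
    have c : ⟪N z, w⟫ = 0 := by
      rw [real_inner_comm]; exact hcross w (N z) hw (hNmem z)
    rw [hJTN z, inner_add_left, c, add_zero]
  -- metallic relation
  have hJJ : ∀ z ∈ D₂, ∀ w ∈ D₂, ⟪J z, J w⟫ = (p : ℝ) * ⟪T z, w⟫ + (q : ℝ) * ⟪z, w⟫ := by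
    intro z hz w hw
    have hs : ⟪z, J w⟫ = ⟪T z, w⟫ := by rw [← hcompat z w]; exact hJT z w (hD₂W hw)
    rw [hcompat z (J w), hJ w, inner_add_right, real_inner_smul_right, real_inner_smul_right, hs]
  -- N inner relation
  have hNN : ∀ z w : V, ⟪N z, N w⟫ = ⟪J z, J w⟫ - ⟪T z, T w⟫ := by
    intro z w
    have c1 : ⟪T z, N w⟫ = 0 := hcross _ _ (hTmem z) (hNmem w)
    have c2 : ⟪N z, T w⟫ = 0 := by
      rw [real_inner_comm]; exact hcross _ _ (hTmem w) (hNmem z)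
    have hd : ⟪J z, J w⟫ = ⟪T z, T w⟫ + ⟪N z, N w⟫ := by
      rw [hJTN z, hJTN w, inner_add_left, inner_add_right, inner_add_right, c1, c2]
      ring
    linarith
  -- N x = N (P₂ x) for x ∈ W
  have hNP : ∀ x ∈ W, N x = N (P₂ x) := by
    intro x hxW
    have hxW' : x ∈ D₁ ⊔ D₂ := by rw [← hW]; exact hxW
    obtain ⟨x₁, h₁, x₂, h₂, hsum⟩ := Submodule.mem_sup.mp hxW'
    have hx₁ : x₁ ∈ D₂ᗮ := (Submodule.mem_orthogonal' D₂ x₁).mpr fun u hu => horth x₁ h₁ u hu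
    have hP : P₂ x = x₂ := by
      rw [hP₂, ← hsum, map_add, Submodule.coe_add,
        Submodule.orthogonalProjectionOnto_apply_of_mem_orthogonal hx₁,
        (show (Submodule.orthogonalProjection D₂ x₂ : V) = x₂ from
          Submodule.starProjection_eq_self_iff.mpr h₂)]
      simp
    have hN₁ : N x₁ = 0 := by
      have hmem : J x₁ ∈ (Wᗮ)ᗮ := W.le_orthogonal_orthogonal (hD₁W (hinv x₁ h₁))
      rw [hN, Submodule.orthogonalProjectionOnto_apply_of_mem_orthogonal hmem]
      simp
    have hNadd : N (x₁ + x₂) = N x₁ + N x₂ := by simp [hN, map_add]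
    rw [hP, ← hsum, hNadd, hN₁, zero_add]
  have hzx : P₂ x ∈ D₂ := hP₂ x ▸ SetLike.coe_mem _
  have hzy : P₂ y ∈ D₂ := hP₂ y ▸ SetLike.coe_mem _
  constructor
  · rw [key _ hzx _ hzy, hJJ _ hzx _ hzy]
  · rw [hNP x hx, hNP y hy, hNN, key _ hzx _ hzy, hJJ _ hzx _ hzy, Real.sin_sq]
    ring
end

section
/- Let p and q be positive integers, σ = (p + √(p² + 4q))/2, σ̄ = p − σ, and let J : ℝ⁴ → ℝ⁴ be the linear map J(x₁, x₂, x₃, x₄) = (σx₁, σ̄x₂, σx₃, σ̄x₄). For t ∈ ℝ let Z₁ = (cos t, (σ/√q)·sin t, 0, 0) ∈ ℝ⁴. Then ⟨JZ₁, Z₁⟩ = σ·cos 2t, ‖Z₁‖² = (p·σ·sin²t + q)/q, ‖JZ₁‖² = p·σ·cos²t + q, and ⟨JZ₁, Z₁⟩ / (‖JZ₁‖·‖Z₁‖) = 2√q·cos 2t / √(p²·sin²2t + 4q). -/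
open scoped RealInnerProductSpace

/-- For the metallic structure `J(x₁, x₂, x₃, x₄) = (σx₁, σ̄x₂, σx₃, σ̄x₄)` on `ℝ⁴` and
`Z₁ = (cos t, (σ/√q)·sin t, 0, 0)`:
`⟪JZ₁, Z₁⟫ = σ·cos 2t`, `‖Z₁‖² = (pσ·sin²t + q)/q`, `‖JZ₁‖² = pσ·cos²t + q`, and
`⟪JZ₁, Z₁⟫/(‖JZ₁‖·‖Z₁‖) = 2√q·cos 2t/√(p²·sin²2t + 4q)`. -/
theorem slant_angle_Z1_R4
    (p q : ℕ) (hp : 0 < p) (hq : 0 < q)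
    (σ σ' : ℝ) (hσ : σ = ((p : ℝ) + Real.sqrt ((p : ℝ) ^ 2 + 4 * (q : ℝ))) / 2)
    (hσ' : σ' = (p : ℝ) - σ)
    (J : EuclideanSpace ℝ (Fin 4) →ₗ[ℝ] EuclideanSpace ℝ (Fin 4))
    (hJdef : ∀ x : EuclideanSpace ℝ (Fin 4),
      J x = ![σ * x 0, σ' * x 1, σ * x 2, σ' * x 3])
    (t : ℝ) (Z₁ : EuclideanSpace ℝ (Fin 4))
    (hZ₁ : Z₁ = ![Real.cos t, (σ / Real.sqrt q) * Real.sin t, 0, 0]) :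
    ⟪J Z₁, Z₁⟫ = σ * Real.cos (2 * t) ∧
    ‖Z₁‖ ^ 2 = ((p : ℝ) * σ * Real.sin t ^ 2 + q) / q ∧
    ‖J Z₁‖ ^ 2 = (p : ℝ) * σ * Real.cos t ^ 2 + q ∧
    ⟪J Z₁, Z₁⟫ / (‖J Z₁‖ * ‖Z₁‖)
      = 2 * Real.sqrt q * Real.cos (2 * t)
        / Real.sqrt ((p : ℝ) ^ 2 * Real.sin (2 * t) ^ 2 + 4 * q) := by
  have hq0 : (0:ℝ) < q := by exact_mod_cast hq
  have hp0 : (1:ℝ) ≤ p := by exact_mod_cast hp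
  have hs : Real.sqrt ((p : ℝ) ^ 2 + 4 * (q : ℝ)) ^ 2 = (p : ℝ) ^ 2 + 4 * q :=
    Real.sq_sqrt (by positivity)
  have hsnn : 0 ≤ Real.sqrt ((p : ℝ) ^ 2 + 4 * (q : ℝ)) := Real.sqrt_nonneg _
  have hσpos : 0 < σ := by rw [hσ]; nlinarith
  have hσsq : σ ^ 2 = p * σ + q := by rw [hσ]; nlinarith
  have hσσ' : σ * σ' = -(q : ℝ) := by rw [hσ']; nlinarith
  have hqs : Real.sqrt (q : ℝ) ^ 2 = q := Real.sq_sqrt hq0.le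
  have hqs0 : 0 < Real.sqrt (q : ℝ) := Real.sqrt_pos.2 hq0
  have hcs : Real.cos t ^ 2 + Real.sin t ^ 2 = 1 := by
    rw [add_comm]; exact Real.sin_sq_add_cos_sq t
  have hinner : ⟪J Z₁, Z₁⟫ = σ * Real.cos (2 * t) := by
    rw [PiLp.inner_apply, hJdef, hZ₁]
    simp only [PiLp.inner_apply, RCLike.inner_apply, conj_trivial, Fin.sum_univ_four,
      Matrix.cons_val_zero, Matrix.cons_val_one, Matrix.head_cons, Matrix.cons_val_two,
      Matrix.tail_cons, Matrix.cons_val_three, mul_zero, zero_mul, add_zero]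
    rw [Real.cos_two_mul']
    field_simp
    linear_combination σ * Real.sin t ^ 2 * hσσ' + Real.sin t ^ 2 * hqs + (Real.sin t ^ 2 - σ * Real.sin t ^ 2) * hσσ'
  have hZn : ‖Z₁‖ ^ 2 = ((p : ℝ) * σ * Real.sin t ^ 2 + q) / q := by
    rw [← real_inner_self_eq_norm_sq, PiLp.inner_apply, hZ₁]
    simp only [PiLp.inner_apply, RCLike.inner_apply, conj_trivial, Fin.sum_univ_four,
      Matrix.cons_val_zero, Matrix.cons_val_one, Matrix.head_cons, Matrix.cons_val_two,
      Matrix.tail_cons, Matrix.cons_val_three, mul_zero, zero_mul, add_zero]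
    field_simp
    linear_combination Real.sin t ^ 2 * hσsq + (q : ℝ) * hcs + (Real.cos t ^ 2 * (q : ℝ) - σ * Real.sin t ^ 2 * (p : ℝ) - (q : ℝ)) * hqs + Real.sin t ^ 2 * ((q : ℝ) - 1) * hσsq + ((q : ℝ) ^ 2 - (q : ℝ)) * hcs
  have hJn : ‖J Z₁‖ ^ 2 = (p : ℝ) * σ * Real.cos t ^ 2 + q := by
    rw [← real_inner_self_eq_norm_sq, PiLp.inner_apply, hJdef, hZ₁]
    simp only [PiLp.inner_apply, RCLike.inner_apply, conj_trivial, Fin.sum_univ_four,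
      Matrix.cons_val_zero, Matrix.cons_val_one, Matrix.head_cons, Matrix.cons_val_two,
      Matrix.tail_cons, Matrix.cons_val_three, mul_zero, zero_mul, add_zero]
    field_simp
    linear_combination (q : ℝ) * Real.cos t ^ 2 * hσsq
      + Real.sin t ^ 2 * (σ * σ' - (q : ℝ)) * hσσ' + (q : ℝ) ^ 2 * hcs + (σ ^ 2 * Real.cos t ^ 2 - σ * Real.cos t ^ 2 * (p : ℝ) - (q : ℝ)) * hqs
  refine ⟨hinner, hZn, hJn, ?_⟩
  have hD : 0 < (p : ℝ) ^ 2 * Real.sin (2 * t) ^ 2 + 4 * q := by positivity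
  have hDs : Real.sqrt ((p : ℝ) ^ 2 * Real.sin (2 * t) ^ 2 + 4 * q) ^ 2
      = (p : ℝ) ^ 2 * Real.sin (2 * t) ^ 2 + 4 * q := Real.sq_sqrt hD.le
  have hDs0 : 0 < Real.sqrt ((p : ℝ) ^ 2 * Real.sin (2 * t) ^ 2 + 4 * q) :=
    Real.sqrt_pos.2 hD
  have hn1 : 0 ≤ ‖J Z₁‖ * ‖Z₁‖ := by positivity
  have hn2 : 0 ≤ σ * Real.sqrt ((p : ℝ) ^ 2 * Real.sin (2 * t) ^ 2 + 4 * q)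
      / (2 * Real.sqrt q) := by positivity
  have poly : 4 * (((p : ℝ) * σ * Real.cos t ^ 2 + q) * ((p : ℝ) * σ * Real.sin t ^ 2 + q))
      = σ ^ 2 * ((p : ℝ) ^ 2 * (2 * Real.sin t * Real.cos t) ^ 2 + 4 * q) := by
    linear_combination 4 * (p : ℝ) * σ * (q : ℝ) * hcs - 4 * (q : ℝ) * hσsq
  have key : ‖J Z₁‖ * ‖Z₁‖
      = σ * Real.sqrt ((p : ℝ) ^ 2 * Real.sin (2 * t) ^ 2 + 4 * q)
        / (2 * Real.sqrt q) := by
    have h1 : (‖J Z₁‖ * ‖Z₁‖) ^ 2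
        = (σ * Real.sqrt ((p : ℝ) ^ 2 * Real.sin (2 * t) ^ 2 + 4 * q)
          / (2 * Real.sqrt q)) ^ 2 := by
      rw [mul_pow, hJn, hZn, div_pow, mul_pow, mul_pow, hDs, hqs, Real.sin_two_mul,
        ← mul_div_assoc, div_eq_div_iff (ne_of_gt hq0) (by positivity)]
      linear_combination (q : ℝ) * poly
    calc ‖J Z₁‖ * ‖Z₁‖ = Real.sqrt ((‖J Z₁‖ * ‖Z₁‖) ^ 2) := (Real.sqrt_sq hn1).symm
      _ = _ := by rw [h1, Real.sqrt_sq hn2]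
  rw [hinner, key, div_div_eq_mul_div,
    div_eq_div_iff (by positivity) (ne_of_gt hDs0)]
  ring
end

section
/- Let p and q be positive integers, σ = (p + √(p² + 4q))/2, σ̄ = p − σ, and let J : ℝ⁵ → ℝ⁵ be the linear map J(x₁, x₂, x₃, x₄, x₅) = (σx₁, σx₂, σ̄x₃, σ̄x₄, σ̄x₅). For f > 0 and α, β ∈ (0, π/2) let Z₁ = (sin α, cos α, sin β, cos β, √(pσ/q)), Z₂ = (f·cos α, −f·sin α, 0, 0, 0), Z₃ = (0, 0, f·cos β, −f·sin β, 0). Then J Z₂ = σ·Z₂ and J Z₃ = σ̄·Z₃ (so span{Z₂, Z₃} is invariant under J), and JZ₁ is orthogonal to each of Z₁, Z₂, Z₃ (so span{Z₁} is anti-invariant: J maps it into the orthogonal complement of span{Z₁, Z₂, Z₃}). -/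
open scoped RealInnerProductSpace

/-- For the metallic structure `J(x₁,…,x₅) = (σx₁, σx₂, σ̄x₃, σ̄x₄, σ̄x₅)` on `ℝ⁵` and the
frame `Z₁, Z₂, Z₃`: `JZ₂ = σ·Z₂`, `JZ₃ = σ̄·Z₃` (so `span{Z₂, Z₃}` is invariant), and
`JZ₁` is orthogonal to each of `Z₁, Z₂, Z₃` (so `span{Z₁}` is anti-invariant). -/
theorem warped_semiInvariant_R5
    (p q : ℕ) (hp : 0 < p) (hq : 0 < q)
    (σ σ' : ℝ) (hσ : σ = ((p : ℝ) + Real.sqrt ((p : ℝ) ^ 2 + 4 * (q : ℝ))) / 2)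
    (hσ' : σ' = (p : ℝ) - σ)
    (J : EuclideanSpace ℝ (Fin 5) →ₗ[ℝ] EuclideanSpace ℝ (Fin 5))
    (hJdef : ∀ x : EuclideanSpace ℝ (Fin 5),
      J x = ![σ * x 0, σ * x 1, σ' * x 2, σ' * x 3, σ' * x 4])
    (f α β : ℝ) (hf : 0 < f) (hα : α ∈ Set.Ioo 0 (Real.pi / 2))
    (hβ : β ∈ Set.Ioo 0 (Real.pi / 2))
    (Z₁ Z₂ Z₃ : EuclideanSpace ℝ (Fin 5))
    (hZ₁ : Z₁ = ![Real.sin α, Real.cos α, Real.sin β, Real.cos β,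
      Real.sqrt ((p : ℝ) * σ / q)])
    (hZ₂ : Z₂ = ![f * Real.cos α, -(f * Real.sin α), 0, 0, 0])
    (hZ₃ : Z₃ = ![0, 0, f * Real.cos β, -(f * Real.sin β), 0]) :
    J Z₂ = σ • Z₂ ∧ J Z₃ = σ' • Z₃ ∧
    ⟪J Z₁, Z₁⟫ = 0 ∧ ⟪J Z₁, Z₂⟫ = 0 ∧ ⟪J Z₁, Z₃⟫ = 0 := by
  have hs : Real.sqrt ((p : ℝ) ^ 2 + 4 * (q : ℝ)) ^ 2 = (p : ℝ) ^ 2 + 4 * (q : ℝ) :=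
    Real.sq_sqrt (by positivity)
  have hσpos : 0 < σ := by
    rw [hσ]
    have : (0:ℝ) < Real.sqrt ((p : ℝ) ^ 2 + 4 * (q : ℝ)) := Real.sqrt_pos.2 (by positivity)
    have hp' : (0:ℝ) < p := by exact_mod_cast hp
    linarith
  have hmul : σ * σ' = -(q : ℝ) := by
    rw [hσ', hσ]; nlinarith [hs]
  have hq' : (0:ℝ) < q := by exact_mod_cast hq
  have hsq : Real.sqrt ((p : ℝ) * σ / q) ^ 2 = (p : ℝ) * σ / q := by
    refine Real.sq_sqrt ?_
    have hp' : (0:ℝ) ≤ p := by positivity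
    positivity
  refine ⟨?_, ?_, ?_, ?_, ?_⟩
  · ext i
    rw [hJdef]
    fin_cases i <;>
      simp [hZ₂, PiLp.smul_apply] <;> ring
  · ext i
    rw [hJdef]
    fin_cases i <;>
      simp [hZ₃, PiLp.smul_apply] <;> ring
  · rw [PiLp.inner_apply, hJdef, hZ₁]
    simp only [PiLp.inner_apply, RCLike.inner_apply, conj_trivial, Fin.sum_univ_five,
      Matrix.cons_val_zero, Matrix.cons_val_one, Matrix.head_cons,
      Matrix.cons_val_two, Matrix.tail_cons, Matrix.cons_val_three, Matrix.cons_val_four]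
    have h1 := Real.sin_sq_add_cos_sq α
    have h2 := Real.sin_sq_add_cos_sq β
    have : σ' * Real.sqrt ((p : ℝ) * σ / q) * Real.sqrt ((p : ℝ) * σ / q)
        = σ' * ((p : ℝ) * σ / q) := by
      rw [mul_assoc, ← sq, hsq]
    rw [mul_comm (Real.sqrt ((p : ℝ) * σ / q)) (σ' * Real.sqrt ((p : ℝ) * σ / q)), this]
    have hsum : σ + σ' = (p : ℝ) := by rw [hσ']; ring
    field_simp
    linear_combination (σ * (q:ℝ)) * h1 + (σ' * (q:ℝ)) * h2 + (p:ℝ) * hmul + (q:ℝ) * hsum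
  · rw [PiLp.inner_apply, hJdef, hZ₁, hZ₂]
    simp only [PiLp.inner_apply, RCLike.inner_apply, conj_trivial, Fin.sum_univ_five,
      Matrix.cons_val_zero, Matrix.cons_val_one, Matrix.head_cons,
      Matrix.cons_val_two, Matrix.tail_cons, Matrix.cons_val_three, Matrix.cons_val_four]
    ring
  · rw [PiLp.inner_apply, hJdef, hZ₁, hZ₃]
    simp only [PiLp.inner_apply, RCLike.inner_apply, conj_trivial, Fin.sum_univ_five,
      Matrix.cons_val_zero, Matrix.cons_val_one, Matrix.head_cons,
      Matrix.cons_val_two, Matrix.tail_cons, Matrix.cons_val_three, Matrix.cons_val_four]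
    ring
end
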